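/- A non-strict preference statement α ≥ β is a tautology (satisfied by every hierarchical model) if and only if for every non-empty subset Y ⊆ V, ⊕_{y∈Y} α(y) ≥ ⊕_{y∈Y} β(y). Moreover, this holds if and only if β > α is a contradiction (satisfied by no hierarchical model). -/

import Mathlib

/-- Aggregate `⊕_{y ∈ Y} α(y)` of an alternative `α` over a (nonempty) set of
variables `Y`, for a commutative associative operation `op`. -/
noncomputable def agg {V W : Type*} [DecidableEq V] [Nonempty W]
    (op : W → W → W) [Std.Commutative op] [Std.Associative op]
    (α : V → W) (Y : Finset V) : W :=
  if h : Y.Nonempty then (Y.erase h.choose).fold op (α h.choose) α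
  else Classical.arbitrary W

/-- `α ⪰_π β` for a hierarchical model `π` (a sequence of variable sets):
lexicographic comparison of the level-wise aggregates. -/
noncomputable def HGe {V W : Type*} [DecidableEq V] [Nonempty W] [LinearOrder W]
    (op : W → W → W) [Std.Commutative op] [Std.Associative op]
    (π : List (Finset V)) (α β : V → W) : Prop :=
  (∀ Y ∈ π, agg op α Y = agg op β Y) ∨
  ∃ i : Fin π.length, agg op α (π.get i) > agg op β (π.get i) ∧
    ∀ j : Fin π.length, (j : ℕ) < (i : ℕ) → agg op α (π.get j) = agg op β (π.get j)

/-- `α ≻_π β`: strict lexicographic comparison of the level-wise aggregates. -/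
noncomputable def HGt {V W : Type*} [DecidableEq V] [Nonempty W] [LinearOrder W]
    (op : W → W → W) [Std.Commutative op] [Std.Associative op]
    (π : List (Finset V)) (α β : V → W) : Prop :=
  ∃ i : Fin π.length, agg op α (π.get i) > agg op β (π.get i) ∧
    ∀ j : Fin π.length, (j : ℕ) < (i : ℕ) → agg op α (π.get j) = agg op β (π.get j)

/-- A hierarchical model is a non-empty sequence of non-empty sets of variables. -/
def ValidH {V : Type*} (π : List (Finset V)) : Prop :=
  π ≠ [] ∧ ∀ Y ∈ π, Y.Nonempty

/-- `α ≥ β` is a tautology iff every nonempty set of variables has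
`⊕`-aggregate of `α` at least that of `β`, iff `β > α` is a contradiction. -/
theorem nonstrict_tautology_iff {V W : Type*} [DecidableEq V] [Nonempty W] [LinearOrder W]
    (op : W → W → W) [Std.Commutative op] [Std.Associative op]
    (α β : V → W) :
    ((∀ π : List (Finset V), ValidH π → HGe op π α β) ↔
      (∀ Y : Finset V, Y.Nonempty → agg op α Y ≥ agg op β Y)) ∧
    ((∀ π : List (Finset V), ValidH π → HGe op π α β) ↔
      (∀ π : List (Finset V), ValidH π → ¬ HGt op π β α)) := by
  classical
  -- key auxiliary statement
  set A : Prop := ∀ Y : Finset V, Y.Nonempty → agg op α Y ≥ agg op β Y with hA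
  have taut_of_A : A → ∀ π : List (Finset V), ValidH π → HGe op π α β := by
    intro hAll π hπ
    by_cases heq : ∀ Y ∈ π, agg op α Y = agg op β Y
    · exact Or.inl heq
    · push_neg at heq
      obtain ⟨Y, hYmem, hYne⟩ := heq
      obtain ⟨n, hn⟩ := List.get_of_mem hYmem
      have hex : ∃ m : ℕ, ∃ h : m < π.length,
          agg op α (π.get ⟨m, h⟩) ≠ agg op β (π.get ⟨m, h⟩) :=
        ⟨n, n.2, fun h => hYne (by rw [← hn]; exact h)⟩
      let m := Nat.find hex
      obtain ⟨hm, hmne⟩ := Nat.find_spec hex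
      refine Or.inr ⟨⟨m, hm⟩, ?_, ?_⟩
      · have hmem : π.get ⟨m, hm⟩ ∈ π := List.get_mem π _
        have hge := hAll _ (hπ.2 _ hmem)
        exact lt_of_le_of_ne hge (Ne.symm hmne)
      · intro j hj
        by_contra hjne
        exact absurd ⟨j.2, hjne⟩ (Nat.find_min hex hj)
  have A_of_taut : (∀ π : List (Finset V), ValidH π → HGe op π α β) → A := by
    intro htaut Y hY
    have := htaut [Y] ⟨by simp, by simpa using hY⟩
    rcases this with h | ⟨i, hi, _⟩
    · exact le_of_eq (h Y (by simp)).symm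
    · have hi0 : (i : ℕ) = 0 := by have h2 := i.2; simp only [List.length_singleton] at h2; omega
      have : i = ⟨0, by simp⟩ := Fin.ext (by simp [hi0])
      subst this
      exact le_of_lt hi
  have noCon_of_A : A → ∀ π : List (Finset V), ValidH π → ¬ HGt op π β α := by
    intro hAll π hπ ⟨i, hi, _⟩
    have hmem : π.get i ∈ π := π.get_mem i
    exact absurd (hAll _ (hπ.2 _ hmem)) (not_le.mpr hi)
  have A_of_noCon : (∀ π : List (Finset V), ValidH π → ¬ HGt op π β α) → A := by
    intro hcon Y hY
    have h := hcon [Y] ⟨by simp, by simpa using hY⟩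
    by_contra hlt
    push_neg at hlt
    exact h ⟨⟨0, by simp⟩, by simpa using hlt, fun j hj => by simp at hj⟩
  exact ⟨⟨A_of_taut, taut_of_A⟩,
    ⟨fun h => noCon_of_A (A_of_taut h), fun h => taut_of_A (A_of_noCon h)⟩⟩
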